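/- Let {ξ_l} be i.i.d. real random variables with density proportional to exp(-|x|^q/2), q ≥ 1, and let u_l = l^{-(s/d + 1/2 - 1/q)} κ^{-1/q} ξ_l for s > 0, κ > 0, d ≥ 1. Then for t < s - d/q, the series ∑_l l^{(tq/d + q/2 - 1)} |u_l|^q converges almost surely. -/

import Mathlib

open MeasureTheory Real ProbabilityTheory

lemma aux_integrable_abs_rpow_exp {q : ℝ} (hq : 1 ≤ q) :
    Integrable (fun x : ℝ => |x| ^ q * Real.exp (-(1/2) * |x| ^ q)) := by
  have hIoi : IntegrableOn (fun x : ℝ => |x| ^ q * Real.exp (-(1/2) * |x| ^ q)) (Set.Ioi 0) := by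
    refine (integrableOn_rpow_mul_exp_neg_mul_rpow (s := q) (p := q) (b := 1/2)
      (by linarith) (by linarith) (by norm_num)).congr_fun (fun x hx => ?_) measurableSet_Ioi
    rw [abs_of_pos (Set.mem_Ioi.mp hx)]
  have hIic : IntegrableOn (fun x : ℝ => |x| ^ q * Real.exp (-(1/2) * |x| ^ q)) (Set.Iic 0) := by
    have m : MeasurableEmbedding fun x : ℝ => -x := (Homeomorph.neg ℝ).measurableEmbedding
    rw [← Measure.map_neg_eq_self (volume : Measure ℝ),
      show (Neg.neg : ℝ → ℝ) = fun x => -x from rfl, m.integrableOn_map_iff]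
    simp_rw [Function.comp_def, abs_neg, Set.neg_preimage, Set.neg_Iic, neg_zero]
    exact Iff.mpr integrableOn_Ici_iff_integrableOn_Ioi hIoi
  rw [← integrableOn_univ, ← Set.Iic_union_Ioi (a := (0:ℝ)), integrableOn_union]
  exact ⟨hIic, hIoi⟩

/-- for i.i.d. ξ_l with density ∝ exp(-|x|^q/2) and
u_l = l^{-(s/d+1/2-1/q)} κ^{-1/q} ξ_l, if t < s - d/q then
∑_l l^{(tq/d+q/2-1)} |u_l|^q converges almost surely.  (Indices l = n+1, n : ℕ.) -/
theorem besov_norm_summable_as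
    {Ω : Type*} [MeasurableSpace Ω] (P : Measure Ω) [IsProbabilityMeasure P]
    (q s t κ : ℝ) (d : ℕ) (hd : 1 ≤ d) (hq : 1 ≤ q) (hs : 0 < s) (hκ : 0 < κ)
    (ht : t < s - (d : ℝ) / q)
    (c : ℝ) (hc : 0 < c)
    (ξ : ℕ → Ω → ℝ) (hmeas : ∀ l, Measurable (ξ l))
    (hindep : iIndepFun ξ P)
    (hdens : ∀ l, Measure.map (ξ l) P
      = volume.withDensity (fun x => ENNReal.ofReal (c * Real.exp (-(|x| ^ q) / 2)))) :
    ∀ᵐ ω ∂P, Summable (fun n : ℕ =>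
      ((n : ℝ) + 1) ^ (t * q / (d : ℝ) + q / 2 - 1) *
        |((n : ℝ) + 1) ^ (-(s / (d : ℝ) + 1 / 2 - 1 / q)) * κ ^ (-(1 / q)) * ξ n ω| ^ q) := by
  have hq0 : (0:ℝ) < q := lt_of_lt_of_le one_pos hq
  have hd0 : (0:ℝ) < (d:ℝ) := by exact_mod_cast Nat.lt_of_lt_of_le Nat.zero_lt_one hd
  set α : ℝ := (s - t) * q / d with hαdef
  have hα : 1 < α := by
    rw [hαdef, lt_div_iff₀ hd0, one_mul]
    have h2 : (d:ℝ)/q < s - t := by linarith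
    calc (d:ℝ) = (d/q)*q := by field_simp
    _ < (s-t)*q := mul_lt_mul_of_pos_right h2 hq0
  set coef : ℕ → ℝ := fun n => ((n:ℝ)+1) ^ (-α) * κ⁻¹ with hcoefdef
  have hcoef_nonneg : ∀ n, 0 ≤ coef n := fun n => by positivity
  -- pointwise identity
  have hg : ∀ (n : ℕ) (x : ℝ),
      ((n : ℝ) + 1) ^ (t * q / (d : ℝ) + q / 2 - 1) *
        |((n : ℝ) + 1) ^ (-(s / (d : ℝ) + 1 / 2 - 1 / q)) * κ ^ (-(1 / q)) * x| ^ q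
      = coef n * |x| ^ q := by
    intro n x
    have hN : (0:ℝ) < (n:ℝ)+1 := by positivity
    rw [abs_mul, abs_mul, abs_of_pos (Real.rpow_pos_of_pos hN _),
      abs_of_pos (Real.rpow_pos_of_pos hκ _),
      Real.mul_rpow (by positivity) (abs_nonneg _),
      Real.mul_rpow (by positivity) (by positivity),
      ← Real.rpow_mul hN.le, ← Real.rpow_mul hκ.le]
    have h1 : (-(1/q))*q = -1 := by field_simp
    rw [h1, Real.rpow_neg_one]
    have key : ((n:ℝ)+1) ^ (t * q / (d:ℝ) + q / 2 - 1) *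
        ((n:ℝ)+1) ^ (-(s / (d:ℝ) + 1 / 2 - 1 / q) * q) = ((n:ℝ)+1) ^ (-α) := by
      rw [← Real.rpow_add hN]
      congr 1
      have e : (1/q) * q = 1 := one_div_mul_cancel hq0.ne'
      rw [hαdef]
      field_simp
      ring
    calc ((n:ℝ)+1) ^ (t * q / (d:ℝ) + q / 2 - 1) *
          (((n:ℝ)+1) ^ (-(s / (d:ℝ) + 1 / 2 - 1 / q) * q) * κ⁻¹ * |x| ^ q)
        = (((n:ℝ)+1) ^ (t * q / (d:ℝ) + q / 2 - 1) *
            ((n:ℝ)+1) ^ (-(s / (d:ℝ) + 1 / 2 - 1 / q) * q)) * (κ⁻¹ * |x| ^ q) := by ring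
      _ = coef n * |x| ^ q := by rw [key, hcoefdef]; ring
  -- measurability helpers
  have hcont : Continuous fun x : ℝ => |x| ^ q :=
    (Real.continuous_rpow_const (by linarith)).comp continuous_abs
  have mφ : Measurable fun x : ℝ => ENNReal.ofReal (|x| ^ q) :=
    ENNReal.measurable_ofReal.comp hcont.measurable
  have mρ : Measurable fun x : ℝ => ENNReal.ofReal (c * Real.exp (-(|x| ^ q) / 2)) := by
    refine ENNReal.measurable_ofReal.comp ?_
    exact (measurable_const.mul ((Real.continuous_exp.comp
      (hcont.neg.div_const 2)).measurable))
  -- the common integral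
  set K : ENNReal := ∫⁻ x, ENNReal.ofReal (c * Real.exp (-(|x| ^ q) / 2)) *
    ENNReal.ofReal (|x| ^ q) with hKdef
  have hint : Integrable (fun x : ℝ => c * Real.exp (-(|x| ^ q) / 2) * |x| ^ q) := by
    refine ((aux_integrable_abs_rpow_exp hq).const_mul c).congr (ae_of_all _ fun x => ?_)
    show c * (|x| ^ q * Real.exp (-(1/2) * |x| ^ q)) = c * Real.exp (-(|x| ^ q) / 2) * |x| ^ q
    rw [show -(1/2) * |x| ^ q = -(|x| ^ q) / 2 by ring]
    ring
  have hK : K ≠ ⊤ := by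
    have hKeq : K = ∫⁻ x, ENNReal.ofReal (c * Real.exp (-(|x| ^ q) / 2) * |x| ^ q) := by
      rw [hKdef]
      congr 1
      funext x
      rw [← ENNReal.ofReal_mul (mul_nonneg hc.le (Real.exp_pos _).le)]
    rw [hKeq]
    exact hint.lintegral_lt_top.ne
  have hL : ∀ l, ∫⁻ ω, ENNReal.ofReal (|ξ l ω| ^ q) ∂P = K := by
    intro l
    rw [← lintegral_map mφ (hmeas l), hdens l,
      lintegral_withDensity_eq_lintegral_mul volume mρ mφ]
    rfl
  -- the family
  set F : ℕ → Ω → ENNReal := fun n ω => ENNReal.ofReal (coef n * |ξ n ω| ^ q) with hFdef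
  have hFmeas : ∀ n, Measurable (F n) := by
    intro n
    exact ENNReal.measurable_ofReal.comp
      ((hcont.measurable.comp (hmeas n)).const_mul (coef n))
  have hFint : ∀ n, ∫⁻ ω, F n ω ∂P = ENNReal.ofReal (coef n) * K := by
    intro n
    calc ∫⁻ ω, ENNReal.ofReal (coef n * |ξ n ω| ^ q) ∂P
        = ∫⁻ ω, ENNReal.ofReal (coef n) * ENNReal.ofReal (|ξ n ω| ^ q) ∂P := by
          simp_rw [ENNReal.ofReal_mul (hcoef_nonneg n)]
      _ = ENNReal.ofReal (coef n) * ∫⁻ ω, ENNReal.ofReal (|ξ n ω| ^ q) ∂P :=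
          lintegral_const_mul _ (ENNReal.measurable_ofReal.comp
            (hcont.measurable.comp (hmeas n)))
      _ = ENNReal.ofReal (coef n) * K := by rw [hL n]
  have hsumcoef : Summable coef := by
    have h1 : Summable (fun n : ℕ => ((n:ℝ)) ^ (-α)) :=
      Real.summable_nat_rpow.mpr (by linarith)
    have h2 := (summable_nat_add_iff 1).mpr h1
    have h3 : Summable (fun n : ℕ => ((n:ℝ)+1) ^ (-α)) := by
      refine h2.congr fun n => ?_
      push_cast
      rfl
    exact h3.mul_right κ⁻¹
  have hsum : ∑' n, ∫⁻ ω, F n ω ∂P ≠ ⊤ := by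
    have heq : ∑' n, ∫⁻ ω, F n ω ∂P = (∑' n, ENNReal.ofReal (coef n)) * K := by
      rw [tsum_congr hFint, ENNReal.tsum_mul_right]
    rw [heq]
    refine ENNReal.mul_ne_top ?_ hK
    rw [← ENNReal.ofReal_tsum_of_nonneg hcoef_nonneg hsumcoef]
    exact ENNReal.ofReal_ne_top
  have htot : ∫⁻ ω, ∑' n, F n ω ∂P ≠ ⊤ := by
    rw [lintegral_tsum fun n => (hFmeas n).aemeasurable]
    exact hsum
  have hae := ae_lt_top (Measurable.ennreal_tsum hFmeas) htot
  filter_upwards [hae] with ω hω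
  have h1 : Summable fun n => (F n ω).toReal := ENNReal.summable_toReal hω.ne
  refine h1.congr fun n => ?_
  rw [hFdef]
  simp only []
  rw [ENNReal.toReal_ofReal (mul_nonneg (hcoef_nonneg n) (by positivity))]
  exact (hg n (ξ n ω)).symm
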